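/- Let D = (V, A) be the directed graph of a finite simple graph G = (V,E), with both arcs on each edge. Let z ∈ ℤ^A be a nonzero vector with z_{r(a)} = −z_a for all a ∈ A that is orthogonal to every cocycle vector (equivalently, for every vertex v, Σ_{w : v→w ∈ A} z_{v→w} = 0). Then there exists an elementary closed path (cycle) of D all of whose arcs a satisfy z_a > 0. -/
import Mathlib


open Finset

/-- The arcs of the directed graph `D = (V, A)` associated to a simple graph `G`. -/
abbrev Arc {V : Type*} (G : SimpleGraph V) : Type _ := {p : V × V // G.Adj p.1 p.2}

/-- The reversed arc. -/
def arcRev {V : Type*} {G : SimpleGraph V} (a : Arc G) : Arc G :=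
  ⟨(a.1.2, a.1.1), a.2.symm⟩

/-- a nonzero antisymmetric integer vector on the arcs that is orthogonal to
every cocycle vector (equivalently, with zero out-flow at every vertex) admits an elementary
closed path (cycle) all of whose arcs carry a strictly positive value. -/
theorem stmt_10 {V : Type*} [Fintype V] [DecidableEq V]
    (G : SimpleGraph V) [DecidableRel G.Adj]
    (z : Arc G → ℤ) (hz : z ≠ 0)
    (hanti : ∀ a : Arc G, z (arcRev a) = - z a)
    (hker : ∀ v : V, (∑ a ∈ univ.filter (fun a : Arc G => (a : V × V).1 = v), z a) = 0) :
    ∃ (n : ℕ) (ω : Fin (n + 1) → V) (h : ∀ i, G.Adj (ω i) (ω (i + 1))),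
      Function.Injective ω ∧ ∀ i, 0 < z ⟨(ω i, ω (i + 1)), h i⟩ := by
  classical
  -- find a starting arc with positive value
  obtain ⟨a0, ha0⟩ : ∃ a : Arc G, 0 < z a := by
    obtain ⟨a, ha⟩ := Function.ne_iff.mp hz
    rcases lt_trichotomy (z a) 0 with h | h | h
    · exact ⟨arcRev a, by rw [hanti]; omega⟩
    · exact absurd h ha
    · exact ⟨a, h⟩
  -- extension step
  have step : ∀ a : Arc G, 0 < z a → ∃ b : Arc G, (b : V × V).1 = (a : V × V).2 ∧ 0 < z b := by
    intro a ha
    by_contra hcon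
    push_neg at hcon
    have hmem : arcRev a ∈ univ.filter (fun b : Arc G => (b : V × V).1 = (a : V × V).2) := by
      simp [arcRev]
    have hlt : ∑ b ∈ univ.filter (fun b : Arc G => (b : V × V).1 = (a : V × V).2), z b
        < ∑ _b ∈ univ.filter (fun b : Arc G => (b : V × V).1 = (a : V × V).2), (0 : ℤ) := by
      refine Finset.sum_lt_sum (fun b hb => hcon b (by simpa using hb)) ?_
      exact ⟨arcRev a, hmem, by rw [hanti]; omega⟩
    rw [hker, Finset.sum_const, smul_zero] at hlt
    exact absurd hlt (lt_irrefl 0)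
  choose nxt h1 h2 using step
  let X : ℕ → {a : Arc G // 0 < z a} :=
    fun k => Nat.rec ⟨a0, ha0⟩ (fun _ p => ⟨nxt p.1 p.2, h2 p.1 p.2⟩) k
  have hXsucc : ∀ k, ((X (k+1)).1 : V × V).1 = ((X k).1 : V × V).2 := fun k => h1 _ _
  set y : ℕ → V := fun k => ((X k).1 : V × V).1 with hy
  have harc : ∀ k, ((X k).1 : V × V) = (y k, y (k+1)) := by
    intro k
    exact Prod.ext rfl (hXsucc k).symm
  have hadj : ∀ k, G.Adj (y k) (y (k+1)) := by
    intro k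
    have := (X k).1.2
    rwa [harc k] at this
  have hpos : ∀ k, 0 < z ⟨(y k, y (k+1)), hadj k⟩ := by
    intro k
    have he : (⟨(y k, y (k+1)), hadj k⟩ : Arc G) = (X k).1 := Subtype.ext (harc k).symm
    rw [he]; exact (X k).2
  -- pigeonhole
  have hex : ∃ j, ∃ i, i < j ∧ y i = y j := by
    obtain ⟨s, t, hst, he⟩ := Finite.exists_ne_map_eq_of_infinite y
    rcases hst.lt_or_gt with h | h
    · exact ⟨t, s, h, he⟩
    · exact ⟨s, t, h, he.symm⟩
  obtain ⟨i0, hij, hieq⟩ := Nat.find_spec hex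
  set j0 := Nat.find hex with hj0
  have hmin : ∀ m, m < j0 → ∀ l, l < m → y l ≠ y m := by
    intro m hm l hl hne
    exact Nat.find_min hex hm ⟨l, hl, hne⟩
  set n := j0 - i0 - 1 with hnn
  have hn : i0 + n + 1 = j0 := by omega
  refine ⟨n, fun k : Fin (n+1) => y (i0 + k), ?_, ?_, ?_⟩
  · -- adjacency, proved after the key rewriting below
    intro i
    by_cases hi : i.val = n
    · have h1' : ((i + 1 : Fin (n+1)) : ℕ) = 0 := by
        have := Fin.val_add_one i
        rw [if_pos (Fin.ext hi)] at this
        exact this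
      have : y (i0 + ((i + 1 : Fin (n+1)) : ℕ)) = y (i0 + i.val + 1) := by
        rw [h1', Nat.add_zero, hi, hn, hieq]
      show G.Adj (y (i0 + i.val)) (y (i0 + ((i + 1 : Fin (n+1)) : ℕ)))
      rw [this]
      exact hadj (i0 + i.val)
    · have h1' : ((i + 1 : Fin (n+1)) : ℕ) = i.val + 1 := by
        have := Fin.val_add_one i
        rw [if_neg (fun hc => hi (by rw [hc]; rfl))] at this
        exact this
      have : y (i0 + ((i + 1 : Fin (n+1)) : ℕ)) = y (i0 + i.val + 1) := by
        rw [h1', ← Nat.add_assoc]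
      show G.Adj (y (i0 + i.val)) (y (i0 + ((i + 1 : Fin (n+1)) : ℕ)))
      rw [this]
      exact hadj (i0 + i.val)
  · -- injectivity
    intro k l hkl
    by_contra hne
    have hklv : (k : ℕ) ≠ (l : ℕ) := fun h => hne (Fin.ext h)
    rcases hklv.lt_or_gt with h | h
    · exact hmin (i0 + l) (by omega) (i0 + k) (by omega) hkl
    · exact hmin (i0 + k) (by omega) (i0 + l) (by omega) hkl.symm
  · -- positivity
    intro i
    have hkey : y (i0 + ((i + 1 : Fin (n+1)) : ℕ)) = y (i0 + i.val + 1) := by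
      by_cases hi : i.val = n
      · have h1' : ((i + 1 : Fin (n+1)) : ℕ) = 0 := by
          have := Fin.val_add_one i
          rw [if_pos (Fin.ext hi)] at this
          exact this
        rw [h1', Nat.add_zero, hi, hn, hieq]
      · have h1' : ((i + 1 : Fin (n+1)) : ℕ) = i.val + 1 := by
          have := Fin.val_add_one i
          rw [if_neg (fun hc => hi (by rw [hc]; rfl))] at this
          exact this
        rw [h1', ← Nat.add_assoc]
    have he : (⟨(y (i0 + i.val), y (i0 + ((i + 1 : Fin (n+1)) : ℕ))), by
        rw [hkey]; exact hadj (i0 + i.val)⟩ : Arc G)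
        = ⟨(y (i0 + i.val), y (i0 + i.val + 1)), hadj (i0 + i.val)⟩ :=
      Subtype.ext (Prod.ext rfl hkey)
    rw [he]
    exact hpos (i0 + i.val)
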